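/- arXiv:2510.11452 — 7 statements merged into one kernel-verified Lean document; each statement's English description precedes it below -/
import Mathlib

section
/- In the two-player interconnected contest with Tullock contest success function with parameter γ ∈ (0,1], in every Nash equilibrium (e_1, e_2) the total effort of each player i ∈ {1,2} satisfies Σ_{k∈B} e_i^k = (γ/c_i) Σ_{k∈B} p_1^k p_2^k v^k, where p_i^k are the equilibrium winning probabilities. -/
open Finset Matrix

/-- Effective effort of a player with spillover matrix `ρ` and effort vector `e`
at battlefield `k`: `y^k = e^k + ∑_{l ≠ k} ρ^{l,k} e^l`. -/
noncomputable def effY {m : ℕ} (ρ : Matrix (Fin m) (Fin m) ℝ) (e : Fin m → ℝ)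
    (k : Fin m) : ℝ :=
  e k + ∑ l ∈ Finset.univ.erase k, ρ l k * e l

/-- Tullock contest success function with parameter `γ`.  When both effective
efforts are `0` this gives `0/0 = 0`, matching the convention. -/
noncomputable def tullock (γ y₁ y₂ : ℝ) : ℝ :=
  y₁ ^ γ / (y₁ ^ γ + y₂ ^ γ)

/-- Payoff of player `i` in the interconnected contest. -/
noncomputable def payoff {m : ℕ} (γ : ℝ) (v : Fin m → ℝ) (c : Fin 2 → ℝ)
    (ρ : Fin 2 → Matrix (Fin m) (Fin m) ℝ) (e : Fin 2 → Fin m → ℝ) (i : Fin 2) : ℝ :=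
  (∑ k, v k * tullock γ (effY (ρ i) (e i) k) (effY (ρ (1 - i)) (e (1 - i)) k))
    - c i * ∑ k, e i k

/-- Pure strategy Nash equilibrium of the interconnected contest:
nonnegative efforts, and no profitable deviation to any nonnegative effort vector. -/
def IsNashEq {m : ℕ} (γ : ℝ) (v : Fin m → ℝ) (c : Fin 2 → ℝ)
    (ρ : Fin 2 → Matrix (Fin m) (Fin m) ℝ) (e : Fin 2 → Fin m → ℝ) : Prop :=
  (∀ i k, 0 ≤ e i k) ∧
  ∀ (i : Fin 2) (e' : Fin m → ℝ), (∀ k, 0 ≤ e' k) →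
    payoff γ v c ρ (Function.update e i e') i ≤ payoff γ v c ρ e i

/-- Winning probability of player `i` at battlefield `k` under profile `e`. -/
noncomputable def eqProb {m : ℕ} (γ : ℝ) (ρ : Fin 2 → Matrix (Fin m) (Fin m) ℝ)
    (e : Fin 2 → Fin m → ℝ) (i : Fin 2) (k : Fin m) : ℝ :=
  tullock γ (effY (ρ i) (e i) k) (effY (ρ (1 - i)) (e (1 - i)) k)

lemma main_foc (m : ℕ) (γ : ℝ) (hγ0 : 0 < γ)
    (v : Fin m → ℝ)
    (c : Fin 2 → ℝ)
    (ρ : Fin 2 → Matrix (Fin m) (Fin m) ℝ)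
    (hρ : ∀ i k l, 0 ≤ ρ i k l)
    (e : Fin 2 → Fin m → ℝ) (he : IsNashEq γ v c ρ e) (i : Fin 2) :
    c i * ∑ k, e i k =
      γ * ∑ k, (effY (ρ i) (e i) k) ^ γ * (effY (ρ (1-i)) (e (1-i)) k) ^ γ /
        ((effY (ρ i) (e i) k) ^ γ + (effY (ρ (1-i)) (e (1-i)) k) ^ γ) ^ 2 * v k := by
  obtain ⟨hnn, hdev⟩ := he
  have hii' : ∀ j : Fin 2, (1 : Fin 2) - j ≠ j := by decide
  have hii : (1 : Fin 2) - i ≠ i := hii' i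
  have hYnn : ∀ j k, 0 ≤ effY (ρ j) (e j) k := by
    intro j k
    have : 0 ≤ ∑ l ∈ Finset.univ.erase k, ρ j l k * e j l :=
      Finset.sum_nonneg fun l _ => mul_nonneg (hρ j l k) (hnn j l)
    simpa [effY] using add_nonneg (hnn j k) this
  set a : Fin m → ℝ := fun k => (effY (ρ i) (e i) k) ^ γ with ha
  set b : Fin m → ℝ := fun k => (effY (ρ (1-i)) (e (1-i)) k) ^ γ with hb
  have hann : ∀ k, 0 ≤ a k := fun k => Real.rpow_nonneg (hYnn i k) γ
  have hbnn : ∀ k, 0 ≤ b k := fun k => Real.rpow_nonneg (hYnn _ k) γ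
  set S : ℝ := ∑ k, e i k with hS
  set g : ℝ → ℝ := fun t =>
    (∑ k, v k * ((t ^ γ * a k) / (t ^ γ * a k + b k))) - c i * (t * S) with hg
  -- payoff of scaled deviation
  have hA : ∀ t : ℝ, 0 ≤ t →
      payoff γ v c ρ (Function.update e i (t • e i)) i = g t := by
    intro t ht
    have heff : ∀ k, effY (ρ i) (t • e i) k = t * effY (ρ i) (e i) k := by
      intro k
      simp only [effY, Pi.smul_apply, smul_eq_mul]
      rw [mul_add, Finset.mul_sum]
      congr 1
      exact Finset.sum_congr rfl fun l _ => by ring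
    simp only [payoff, Function.update_self, Function.update_of_ne hii]
    rw [hg]
    congr 1
    · apply Finset.sum_congr rfl
      intro k _
      rw [heff k]
      unfold tullock
      rw [Real.mul_rpow ht (hYnn i k)]
    · rw [hS]
      simp only [Pi.smul_apply, smul_eq_mul, ← Finset.mul_sum]
  have hA1 : g 1 = payoff γ v c ρ e i := by
    have := hA 1 zero_le_one
    rw [one_smul, Function.update_eq_self] at this
    exact this.symm
  set D : ℝ := (∑ k, v k * (γ * (a k * b k) / (a k + b k) ^ 2)) - c i * S with hD
  have hB : HasDerivAt g D 1 := by
    have h1 : ∀ k ∈ (Finset.univ : Finset (Fin m)),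
        HasDerivAt (fun t : ℝ => v k * ((t ^ γ * a k) / (t ^ γ * a k + b k)))
          (v k * (γ * (a k * b k) / (a k + b k) ^ 2)) 1 := by
      intro k _
      refine HasDerivAt.const_mul _ ?_
      rcases eq_or_lt_of_le (hann k) with h0 | h0
      · have hfun : (fun t : ℝ => (t ^ γ * a k) / (t ^ γ * a k + b k)) = fun _ => 0 := by
          funext t
          rw [← h0]
          simp
        rw [hfun, ← h0]
        simpa using hasDerivAt_const (1 : ℝ) (0 : ℝ)
      · have hu : HasDerivAt (fun t : ℝ => t ^ γ * a k) (γ * a k) 1 := by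
          have := (Real.hasDerivAt_rpow_const (x := (1:ℝ)) (p := γ)
            (Or.inl one_ne_zero)).mul_const (a k)
          simpa using this
        have hden0 : (0:ℝ) < a k + b k := add_pos_of_pos_of_nonneg h0 (hbnn k)
        have hden : (1:ℝ) ^ γ * a k + b k ≠ 0 := by
          rw [Real.one_rpow, one_mul]; exact ne_of_gt hden0
        have hd := hu.fun_div (hu.add_const (b k)) hden
        convert hd using 1
        rw [Real.one_rpow, one_mul]
        have h2 : (a k + b k) ^ 2 ≠ 0 := pow_ne_zero 2 (ne_of_gt hden0)
        field_simp
        ring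
    have hsum := HasDerivAt.fun_sum h1
    have hlin : HasDerivAt (fun t : ℝ => c i * (t * S)) (c i * S) 1 := by
      have := HasDerivAt.const_mul (c i) ((hasDerivAt_id (1:ℝ)).mul_const S)
      simpa using this
    exact hsum.sub hlin
  have hmax : IsLocalMax g 1 := by
    have hle : ∀ t : ℝ, 0 ≤ t → g t ≤ g 1 := by
      intro t ht
      rw [← hA t ht, hA1]
      exact hdev i (t • e i) (fun k => by
        simpa [Pi.smul_apply, smul_eq_mul] using mul_nonneg ht (hnn i k))
    have hmem : Set.Ioi (0:ℝ) ∈ nhds (1:ℝ) := Ioi_mem_nhds one_pos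
    exact Filter.eventually_of_mem hmem fun t ht => hle t (le_of_lt ht)
  have hD0 : D = 0 := hmax.hasDerivAt_eq_zero hB
  have hkey : c i * S = ∑ k, v k * (γ * (a k * b k) / (a k + b k) ^ 2) := by
    have := hD0
    rw [hD] at this
    linarith
  rw [hkey, Finset.mul_sum]
  apply Finset.sum_congr rfl
  intro k _
  simp only [ha, hb]
  ring

/-- equilibrium total effort formula. -/
theorem equilibrium_total_effort (m : ℕ) (γ : ℝ) (hγ0 : 0 < γ) (hγ1 : γ ≤ 1)
    (v : Fin m → ℝ) (hv : ∀ k, 0 < v k)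
    (c : Fin 2 → ℝ) (hc : ∀ i, 0 < c i)
    (ρ : Fin 2 → Matrix (Fin m) (Fin m) ℝ)
    (hρ : ∀ i k l, 0 ≤ ρ i k l) (hρd : ∀ i k, ρ i k k = 0)
    (e : Fin 2 → Fin m → ℝ) (he : IsNashEq γ v c ρ e) (i : Fin 2) :
    ∑ k, e i k = (γ / c i) * ∑ k, eqProb γ ρ e 0 k * eqProb γ ρ e 1 k * v k := by
  have hmain := main_foc m γ hγ0 v c ρ hρ e he i
  have hprod : ∀ k, eqProb γ ρ e 0 k * eqProb γ ρ e 1 k =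
      (effY (ρ i) (e i) k) ^ γ * (effY (ρ (1-i)) (e (1-i)) k) ^ γ /
        ((effY (ρ i) (e i) k) ^ γ + (effY (ρ (1-i)) (e (1-i)) k) ^ γ) ^ 2 := by
    intro k
    have h10 : (1 : Fin 2) - 0 = 1 := by decide
    have h11 : (1 : Fin 2) - 1 = 0 := by decide
    set A : ℝ := (effY (ρ 0) (e 0) k) ^ γ with hA
    set B : ℝ := (effY (ρ 1) (e 1) k) ^ γ with hB
    have hP : eqProb γ ρ e 0 k * eqProb γ ρ e 1 k = A * B / (A + B) ^ 2 := by
      simp only [eqProb, tullock, h10, h11, ← hA, ← hB]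
      rw [div_mul_div_comm, show (A + B) * (B + A) = (A + B) ^ 2 from by ring]
    have hi2 : i = 0 ∨ i = 1 := by fin_cases i <;> simp
    rcases hi2 with hi | hi <;> subst hi
    · simpa [h10, ← hA, ← hB] using hP
    · rw [hP]
      simp only [h11, ← hA, ← hB]
      ring
  rw [div_mul_eq_mul_div, eq_div_iff (ne_of_gt (hc i))]
  calc (∑ k, e i k) * c i = c i * ∑ k, e i k := by ring
    _ = γ * ∑ k, (effY (ρ i) (e i) k) ^ γ * (effY (ρ (1-i)) (e (1-i)) k) ^ γ /
        ((effY (ρ i) (e i) k) ^ γ + (effY (ρ (1-i)) (e (1-i)) k) ^ γ) ^ 2 * v k := hmain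
    _ = γ * ∑ k, eqProb γ ρ e 0 k * eqProb γ ρ e 1 k * v k := by
        congr 1
        exact Finset.sum_congr rfl fun k _ => by rw [hprod k]
end

section
/- In the two-player interconnected contest with Tullock contest success function with parameter γ ∈ (0,1], in every Nash equilibrium (e_1, e_2) the payoff of each player i ∈ {1,2} satisfies Π_i(e_1,e_2) = Σ_{k∈B} p_i^k (1 − γ p_{-i}^k) v^k, where p_i^k are the equilibrium winning probabilities. -/
open Finset Matrix

/-- The Tullock probability vanishes when the first effective effort is `0`. -/
lemma tullock_zero_left (γ : ℝ) (hγ : γ ≠ 0) (y : ℝ) : tullock γ 0 y = 0 := by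
  simp [tullock, Real.zero_rpow hγ]

/-- Derivative of the Tullock probability along a scaling of the first effort,
evaluated at scale `1`: it equals `γ p₁ p₂`. -/
lemma tullock_hasDerivAt (γ : ℝ) (hγ : 0 < γ) (y1 y2 : ℝ) (h1 : 0 ≤ y1) (h2 : 0 ≤ y2) :
    HasDerivAt (fun t => tullock γ (t * y1) y2)
      (γ * tullock γ y1 y2 * tullock γ y2 y1) 1 := by
  rcases h1.eq_or_lt with rfl | h1
  · have heq : (fun t : ℝ => tullock γ (t * 0) y2) = fun _ => (0:ℝ) := by
      funext t; rw [mul_zero, tullock_zero_left γ hγ.ne']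
    rw [heq, tullock_zero_left γ hγ.ne', mul_zero, zero_mul]
    exact hasDerivAt_const 1 0
  rcases h2.eq_or_lt with rfl | h2
  · have hne : (fun t : ℝ => tullock γ (t * y1) 0) =ᶠ[nhds 1] fun _ => (1:ℝ) := by
      filter_upwards [Ioi_mem_nhds (zero_lt_one : (0:ℝ) < 1)] with t ht
      have hp : 0 < (t * y1) ^ γ := Real.rpow_pos_of_pos (mul_pos ht h1) γ
      simp [tullock, Real.zero_rpow hγ.ne', hp.ne']
    rw [tullock_zero_left γ hγ.ne', mul_zero]
    exact (hasDerivAt_const 1 (1:ℝ)).congr_of_eventuallyEq hne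
  · have hpow : HasDerivAt (fun t : ℝ => t ^ γ) γ 1 := by
      have := Real.hasDerivAt_rpow_const (x := (1:ℝ)) (p := γ) (Or.inl one_ne_zero)
      simpa using this
    have hnum : HasDerivAt (fun t : ℝ => t ^ γ * y1 ^ γ) (γ * y1 ^ γ) 1 := hpow.mul_const _
    have hden : HasDerivAt (fun t : ℝ => t ^ γ * y1 ^ γ + y2 ^ γ) (γ * y1 ^ γ) 1 :=
      hnum.add_const _
    have ha : 0 < y1 ^ γ := Real.rpow_pos_of_pos h1 γ
    have hb : 0 < y2 ^ γ := Real.rpow_pos_of_pos h2 γ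
    have hden1 : (1:ℝ) ^ γ * y1 ^ γ + y2 ^ γ ≠ 0 := by
      rw [Real.one_rpow]; positivity
    have hdiv := hnum.div hden hden1
    have heq : (fun t : ℝ => tullock γ (t * y1) y2) =ᶠ[nhds 1]
        fun t => t ^ γ * y1 ^ γ / (t ^ γ * y1 ^ γ + y2 ^ γ) := by
      filter_upwards [Ioi_mem_nhds (zero_lt_one : (0:ℝ) < 1)] with t ht
      rw [tullock, Real.mul_rpow ht.le h1.le]
    have h := hdiv.congr_of_eventuallyEq heq
    refine h.congr_deriv ?_
    rw [tullock, tullock, Real.one_rpow]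
    have hab : y1 ^ γ + y2 ^ γ ≠ 0 := by positivity
    have hba : y2 ^ γ + y1 ^ γ ≠ 0 := by positivity
    field_simp
    ring

/-- First-order condition: if scaling all own efforts by `t ≥ 0` is never
profitable relative to `t = 1`, then total cost equals `∑ γ p₁ p₂ v`. -/
lemma foc {m : ℕ} (γ : ℝ) (hγ : 0 < γ) (v y1 y2 : Fin m → ℝ)
    (h1 : ∀ k, 0 ≤ y1 k) (h2 : ∀ k, 0 ≤ y2 k) (cS : ℝ)
    (hmax : ∀ t : ℝ, 0 ≤ t →
      (∑ k, v k * tullock γ (t * y1 k) (y2 k)) - t * cS ≤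
      (∑ k, v k * tullock γ (1 * y1 k) (y2 k)) - 1 * cS) :
    ∑ k, v k * (γ * tullock γ (y1 k) (y2 k) * tullock γ (y2 k) (y1 k)) = cS := by
  have hder : HasDerivAt
      (fun t : ℝ => (∑ k, v k * tullock γ (t * y1 k) (y2 k)) - t * cS)
      ((∑ k, v k * (γ * tullock γ (y1 k) (y2 k) * tullock γ (y2 k) (y1 k))) - cS) 1 := by
    apply HasDerivAt.sub
    · exact HasDerivAt.fun_sum fun k _ =>
        (tullock_hasDerivAt γ hγ (y1 k) (y2 k) (h1 k) (h2 k)).const_mul (v k)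
    · simpa using (hasDerivAt_id (1:ℝ)).mul_const cS
  have hloc : IsLocalMax
      (fun t : ℝ => (∑ k, v k * tullock γ (t * y1 k) (y2 k)) - t * cS) 1 := by
    filter_upwards [Ioi_mem_nhds (zero_lt_one : (0:ℝ) < 1)] with t ht
    exact hmax t ht.le
  have h0 := hloc.hasDerivAt_eq_zero hder
  linarith

/-- Effective effort is linear under scaling of the effort vector. -/
lemma effY_smul {m : ℕ} (ρ : Matrix (Fin m) (Fin m) ℝ) (e : Fin m → ℝ) (t : ℝ) (k : Fin m) :
    effY ρ (fun l => t * e l) k = t * effY ρ e k := by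
  unfold effY
  rw [mul_add, Finset.mul_sum]
  congr 1
  exact Finset.sum_congr rfl fun l _ => by ring

lemma fin2_sub_ne (i : Fin 2) : (1 - i) ≠ i := by revert i; decide

lemma fin2_sub_sub (i : Fin 2) : 1 - (1 - i) = i := by revert i; decide

/-- equilibrium payoff formula. -/
theorem equilibrium_payoff_formula (m : ℕ) (γ : ℝ) (hγ0 : 0 < γ) (hγ1 : γ ≤ 1)
    (v : Fin m → ℝ) (hv : ∀ k, 0 < v k)
    (c : Fin 2 → ℝ) (hc : ∀ i, 0 < c i)
    (ρ : Fin 2 → Matrix (Fin m) (Fin m) ℝ)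
    (hρ : ∀ i k l, 0 ≤ ρ i k l) (hρd : ∀ i k, ρ i k k = 0)
    (e : Fin 2 → Fin m → ℝ) (he : IsNashEq γ v c ρ e) (i : Fin 2) :
    payoff γ v c ρ e i =
      ∑ k, eqProb γ ρ e i k * (1 - γ * eqProb γ ρ e (1 - i) k) * v k := by
  obtain ⟨hnn, hbr⟩ := he
  have hynn : ∀ (j : Fin 2) k, 0 ≤ effY (ρ j) (e j) k := fun j k =>
    add_nonneg (hnn j k) (Finset.sum_nonneg fun l _ => mul_nonneg (hρ j l k) (hnn j l))
  have hmax : ∀ t : ℝ, 0 ≤ t →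
      (∑ k, v k * tullock γ (t * effY (ρ i) (e i) k) (effY (ρ (1-i)) (e (1-i)) k))
        - t * (c i * ∑ k, e i k) ≤
      (∑ k, v k * tullock γ (1 * effY (ρ i) (e i) k) (effY (ρ (1-i)) (e (1-i)) k))
        - 1 * (c i * ∑ k, e i k) := by
    intro t ht
    have h := hbr i (fun k => t * e i k) (fun k => mul_nonneg ht (hnn i k))
    have hupd_i : Function.update e i (fun k => t * e i k) i = fun k => t * e i k :=
      Function.update_self ..
    have hupd_o : Function.update e i (fun k => t * e i k) (1 - i) = e (1 - i) :=
      Function.update_of_ne (fin2_sub_ne i) _ _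
    unfold payoff at h
    rw [hupd_i, hupd_o] at h
    simp only [effY_smul] at h
    calc (∑ k, v k * tullock γ (t * effY (ρ i) (e i) k) (effY (ρ (1-i)) (e (1-i)) k))
          - t * (c i * ∑ k, e i k)
        = (∑ k, v k * tullock γ (t * effY (ρ i) (e i) k) (effY (ρ (1-i)) (e (1-i)) k))
          - c i * ∑ k, t * e i k := by rw [← Finset.mul_sum]; ring
      _ ≤ (∑ k, v k * tullock γ (effY (ρ i) (e i) k) (effY (ρ (1-i)) (e (1-i)) k))
          - c i * ∑ k, e i k := h
      _ = (∑ k, v k * tullock γ (1 * effY (ρ i) (e i) k) (effY (ρ (1-i)) (e (1-i)) k))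
          - 1 * (c i * ∑ k, e i k) := by simp only [one_mul]
  have hfoc := foc γ hγ0 v (fun k => effY (ρ i) (e i) k) (fun k => effY (ρ (1-i)) (e (1-i)) k)
    (hynn i) (hynn (1-i)) (c i * ∑ k, e i k) hmax
  have hq : ∀ k, eqProb γ ρ e (1 - i) k =
      tullock γ (effY (ρ (1-i)) (e (1-i)) k) (effY (ρ i) (e i) k) := by
    intro k; unfold eqProb; rw [fin2_sub_sub]
  unfold payoff
  rw [← hfoc, ← Finset.sum_sub_distrib]
  refine Finset.sum_congr rfl fun k _ => ?_
  rw [hq k]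
  unfold eqProb
  ring
end

section
/- In the two-player interconnected contest with Tullock contest success function with parameter γ = 1, let (e_1, e_2) be a profile of nonnegative effort vectors whose induced effective efforts satisfy y_1^k + y_2^k > 0 for every battlefield k. Then (e_1, e_2) is a Nash equilibrium if and only if for every player i ∈ {1,2} and every battlefield k ∈ B: v^k y_{-i}^k/(y_1^k + y_2^k)^2 + Σ_{l ≠ k} ρ_i^{k,l} v^l y_{-i}^l/(y_1^l + y_2^l)^2 ≤ c_i, with equality whenever e_i^k > 0. -/
open Finset Matrix

lemma tullock_one (a b : ℝ) : tullock 1 a b = a / (a + b) := by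
  simp [tullock, Real.rpow_one]

lemma concave_bound (t t' b : ℝ) (ht' : 0 ≤ t') (hb : 0 ≤ b) (hs : 0 < t + b) :
    t' / (t' + b) ≤ t / (t + b) + b * (t' - t) / (t + b) ^ 2 := by
  rcases eq_or_lt_of_le (by linarith : (0:ℝ) ≤ t' + b) with h | h
  · have hb0 : b = 0 := by linarith
    have ht0 : t' = 0 := by linarith
    subst hb0; subst ht0
    have ht : (0:ℝ) < t := by linarith
    simp
    exact div_nonneg ht.le ht.le
  · have key : (t / (t + b) + b * (t' - t) / (t + b) ^ 2) - t' / (t' + b)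
        = b * (t - t') ^ 2 / ((t + b) ^ 2 * (t' + b)) := by
      field_simp
      ring
    nlinarith [div_nonneg (mul_nonneg hb (sq_nonneg (t - t')))
      (le_of_lt (mul_pos (pow_pos hs 2) h))]

lemma diff_eq (t b d : ℝ) (h1 : 0 < t + b) (h2 : 0 < t + d + b) :
    (t + d) / (t + d + b) - t / (t + b) = d * b / ((t + d + b) * (t + b)) := by
  field_simp
  ring

lemma effY_nonneg {m : ℕ} (ρ : Matrix (Fin m) (Fin m) ℝ) (hρ : ∀ k l, 0 ≤ ρ k l)
    (e : Fin m → ℝ) (he : ∀ k, 0 ≤ e k) (l : Fin m) : 0 ≤ effY ρ e l :=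
  add_nonneg (he l) (Finset.sum_nonneg fun j _ => mul_nonneg (hρ j l) (he j))

lemma effY_apply_sum {m : ℕ} (ρ : Matrix (Fin m) (Fin m) ℝ) (e : Fin m → ℝ) (l : Fin m) :
    effY ρ e l = ∑ j, (if j = l then 1 else ρ j l) * e j := by
  rw [effY,
    show (∑ j, (if j = l then 1 else ρ j l) * e j)
        = (if l = l then 1 else ρ l l) * e l
          + ∑ j ∈ Finset.univ.erase l, (if j = l then 1 else ρ j l) * e j from
      (Finset.add_sum_erase _ _ (Finset.mem_univ l)).symm]
  simp only [if_pos rfl, one_mul]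
  rw [Finset.sum_congr rfl fun j hj =>
    (by rw [if_neg (Finset.ne_of_mem_erase hj)] :
      (if j = l then (1:ℝ) else ρ j l) * e j = ρ j l * e j)]
  simp

lemma update_apply_eq {m : ℕ} (e : Fin m → ℝ) (k j : Fin m) (d : ℝ) :
    Function.update e k (e k + d) j = e j + if j = k then d else 0 := by
  by_cases h : j = k
  · subst h; simp
  · simp [Function.update_of_ne h, h]

lemma effY_update {m : ℕ} (ρ : Matrix (Fin m) (Fin m) ℝ) (e : Fin m → ℝ)
    (k : Fin m) (d : ℝ) (l : Fin m) :
    effY ρ (Function.update e k (e k + d)) l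
      = effY ρ e l + d * (if l = k then 1 else ρ k l) := by
  simp only [effY, update_apply_eq, mul_add]
  rw [Finset.sum_add_distrib]
  have h1 : ∑ j ∈ Finset.univ.erase l, (ρ j l * if j = k then d else 0)
      = if k ∈ Finset.univ.erase l then ρ k l * d else 0 := by
    rw [← Finset.sum_ite_eq' (Finset.univ.erase l) k (fun j => ρ j l * d)]
    refine Finset.sum_congr rfl fun j hj => ?_
    by_cases h : j = k <;> simp [h]
  rw [h1]
  by_cases h : l = k
  · subst h; simp [Finset.mem_erase]; ring
  · have hk : k ∈ Finset.univ.erase l := Finset.mem_erase.mpr ⟨Ne.symm h, Finset.mem_univ k⟩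
    simp only [if_neg h, hk, if_pos]
    ring

lemma sum_split {m : ℕ} (f g : Fin m → ℝ) (k : Fin m) :
    ∑ l, (if l = k then 1 else g l) * f l
      = f k + ∑ l ∈ Finset.univ.erase k, g l * f l := by
  rw [show (∑ l, (if l = k then 1 else g l) * f l)
        = (if k = k then 1 else g k) * f k
          + ∑ l ∈ Finset.univ.erase k, (if l = k then 1 else g l) * f l from
      (Finset.add_sum_erase _ _ (Finset.mem_univ k)).symm]
  simp only [if_pos rfl, one_mul]
  rw [Finset.sum_congr rfl fun j hj =>
    (by rw [if_neg (Finset.ne_of_mem_erase hj)] :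
      (if j = k then (1:ℝ) else g j) * f j = g j * f j)]
  simp

lemma sum_update {m : ℕ} (e : Fin m → ℝ) (k : Fin m) (d : ℝ) :
    ∑ j, Function.update e k (e k + d) j = d + ∑ j, e j := by
  rw [Finset.sum_update_of_mem (Finset.mem_univ k),
    ← Finset.add_sum_erase _ _ (Finset.mem_univ k), Finset.erase_eq]
  ring


lemma perturb_lb (v a b s d : ℝ) (hv : 0 ≤ v) (ha : 0 ≤ a) (hb : 0 ≤ b)
    (hs : 0 < s) (hd : 0 ≤ d) :
    a * (v * b / s ^ 2) - d * (v * a ^ 2 * b / s ^ 3)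
      ≤ v * (a * b / ((s + d * a) * s)) := by
  have hda : 0 ≤ d * a := mul_nonneg hd ha
  have hx : 0 < s + d * a := by linarith
  have hid : v * (a * b / ((s + d * a) * s))
      - (a * (v * b / s ^ 2) - d * (v * a ^ 2 * b / s ^ 3))
      = v * a * b * (d * a) ^ 2 / ((s + d * a) * s ^ 3) := by
    field_simp
    ring
  have hnn : 0 ≤ v * a * b * (d * a) ^ 2 / ((s + d * a) * s ^ 3) :=
    div_nonneg (mul_nonneg (mul_nonneg (mul_nonneg hv ha) hb) (sq_nonneg _))
      (mul_pos hx (pow_pos hs 3)).le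
  linarith

lemma perturb_ub (v a b s d : ℝ) (hv : 0 ≤ v) (ha : 0 ≤ a) (hb : 0 ≤ b)
    (hs : 0 < s) (hd : 0 ≤ d) (hda : 2 * (d * a) ≤ s) :
    v * (a * b / ((s + -d * a) * s))
      ≤ a * (v * b / s ^ 2) + d * (2 * (v * a ^ 2 * b / s ^ 3)) := by
  have hda0 : 0 ≤ d * a := mul_nonneg hd ha
  have hx : 0 < s + -d * a := by nlinarith
  have hL : v * (a * b / ((s + -d * a) * s)) = v * a * b / ((s + -d * a) * s) := by
    ring
  have hR : a * (v * b / s ^ 2) + d * (2 * (v * a ^ 2 * b / s ^ 3))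
      = (a * v * b * s + 2 * d * v * a ^ 2 * b) / s ^ 3 := by
    field_simp
  rw [hL, hR, div_le_div_iff₀ (mul_pos hx hs) (pow_pos hs 3)]
  nlinarith [mul_nonneg (mul_nonneg (mul_nonneg (mul_nonneg hv hd) hb) (sq_nonneg a))
    (mul_nonneg hs.le (by linarith : 0 ≤ s - 2 * (d * a)))]


lemma key {m : ℕ} (v : Fin m → ℝ) (hv : ∀ k, 0 < v k) (ci : ℝ)
    (ρi : Matrix (Fin m) (Fin m) ℝ) (hρi : ∀ k l, 0 ≤ ρi k l)
    (b : Fin m → ℝ) (hb : ∀ l, 0 ≤ b l)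
    (ei : Fin m → ℝ) (hei : ∀ k, 0 ≤ ei k)
    (hs : ∀ l, 0 < effY ρi ei l + b l) :
    (∀ e' : Fin m → ℝ, (∀ k, 0 ≤ e' k) →
      (∑ l, v l * tullock 1 (effY ρi e' l) (b l)) - ci * ∑ l, e' l
        ≤ (∑ l, v l * tullock 1 (effY ρi ei l) (b l)) - ci * ∑ l, ei l) ↔
    ∀ k, (v k * b k / (effY ρi ei k + b k) ^ 2
            + ∑ l ∈ Finset.univ.erase k,
                ρi k l * (v l * b l / (effY ρi ei l + b l) ^ 2) ≤ ci)
         ∧ (0 < ei k →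
            v k * b k / (effY ρi ei k + b k) ^ 2
              + ∑ l ∈ Finset.univ.erase k,
                  ρi k l * (v l * b l / (effY ρi ei l + b l) ^ 2) = ci) := by
  constructor
  · -- Nash ⇒ KKT
    intro hbr k
    have hA : ∀ l : Fin m, 0 ≤ (if l = k then (1:ℝ) else ρi k l) := by
      intro l
      by_cases h : l = k
      · simp [h]
      · simp only [if_neg h]; exact hρi k l
    -- general deviation inequality
    have hdev : ∀ d : ℝ,
        (∀ l, 0 < (effY ρi ei l + b l) + d * (if l = k then (1:ℝ) else ρi k l)) →
        0 ≤ ei k + d →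
        d * (∑ l, v l * ((if l = k then (1:ℝ) else ρi k l) * b l /
              (((effY ρi ei l + b l) + d * (if l = k then (1:ℝ) else ρi k l)) * (effY ρi ei l + b l))))
          ≤ ci * d := by
      intro d hpos hnn
      have he' : ∀ j, 0 ≤ Function.update ei k (ei k + d) j := by
        intro j
        by_cases h : j = k
        · subst h; simpa using hnn
        · rw [Function.update_of_ne h]; exact hei j
      have H := hbr _ he'
      have hterm : ∀ l ∈ Finset.univ,
          v l * tullock 1 (effY ρi (Function.update ei k (ei k + d)) l) (b l)
          = v l * tullock 1 (effY ρi ei l) (b l)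
            + d * (v l * ((if l = k then (1:ℝ) else ρi k l) * b l /
                (((effY ρi ei l + b l) + d * (if l = k then (1:ℝ) else ρi k l)) * (effY ρi ei l + b l)))) := by
        intro l _
        rw [effY_update, tullock_one, tullock_one]
        have h2 := diff_eq (effY ρi ei l) (b l) (d * (if l = k then (1:ℝ) else ρi k l)) (hs l)
          (by have := hpos l; linarith)
        have h3 : effY ρi ei l + d * (if l = k then (1:ℝ) else ρi k l) + b l
            = (effY ρi ei l + b l) + d * (if l = k then (1:ℝ) else ρi k l) := by ring
        rw [h3] at h2
        linear_combination (v l) * h2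
      rw [Finset.sum_congr rfl hterm, Finset.sum_add_distrib, ← Finset.mul_sum,
        sum_update] at H
      linarith
    have goalA : (∑ l, (if l = k then (1:ℝ) else ρi k l) * (v l * b l / (effY ρi ei l + b l) ^ 2)) ≤ ci := by
      refine le_of_forall_pos_le_add fun ε hε => ?_
      have hK0 : (0:ℝ) ≤ ∑ l, v l * (if l = k then (1:ℝ) else ρi k l) ^ 2 * b l / (effY ρi ei l + b l) ^ 3 :=
        Finset.sum_nonneg fun l _ =>
          div_nonneg (mul_nonneg (mul_nonneg (hv l).le (sq_nonneg _)) (hb l))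
            (pow_pos (hs l) 3).le
      set K : ℝ := ∑ l, v l * (if l = k then (1:ℝ) else ρi k l) ^ 2 * b l / (effY ρi ei l + b l) ^ 3 with hK_def
      set d : ℝ := ε / (K + 1) with hd_def
      have hd : 0 < d := div_pos hε (by linarith)
      have hpos : ∀ l, 0 < (effY ρi ei l + b l) + d * (if l = k then (1:ℝ) else ρi k l) := by
        intro l
        have h1 : 0 ≤ d * (if l = k then (1:ℝ) else ρi k l) := mul_nonneg hd.le (hA l)
        have := hs l
        linarith
      have H := hdev d hpos (by have := hei k; linarith)
      have hT : (∑ l, v l * ((if l = k then (1:ℝ) else ρi k l) * b l /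
            (((effY ρi ei l + b l) + d * (if l = k then (1:ℝ) else ρi k l)) * (effY ρi ei l + b l)))) ≤ ci := by
        rw [mul_comm ci d] at H
        exact le_of_mul_le_mul_left H hd
      have hper : ∀ l ∈ Finset.univ,
          (if l = k then (1:ℝ) else ρi k l) * (v l * b l / (effY ρi ei l + b l) ^ 2) - d * (v l * (if l = k then (1:ℝ) else ρi k l) ^ 2 * b l / (effY ρi ei l + b l) ^ 3)
            ≤ v l * ((if l = k then (1:ℝ) else ρi k l) * b l /
                (((effY ρi ei l + b l) + d * (if l = k then (1:ℝ) else ρi k l)) * (effY ρi ei l + b l))) := fun l _ =>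
        perturb_lb (v l) ((if l = k then (1:ℝ) else ρi k l)) (b l) ((effY ρi ei l + b l)) d
          (hv l).le (hA l) (hb l) (hs l) hd.le
      have hsum := Finset.sum_le_sum hper
      rw [Finset.sum_sub_distrib, ← Finset.mul_sum, ← hK_def] at hsum
      have h1 : d * (K + 1) = ε := by
        rw [hd_def]; exact div_mul_cancel₀ ε (by linarith)
      have hdK : d * K ≤ ε := by nlinarith
      linarith
    have goalB : 0 < ei k →
        ci ≤ ∑ l, (if l = k then (1:ℝ) else ρi k l) * (v l * b l / (effY ρi ei l + b l) ^ 2) := by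
      intro hek
      refine le_of_forall_pos_le_add fun ε hε => ?_
      have hK0 : (0:ℝ) ≤ ∑ l, v l * (if l = k then (1:ℝ) else ρi k l) ^ 2 * b l / (effY ρi ei l + b l) ^ 3 :=
        Finset.sum_nonneg fun l _ =>
          div_nonneg (mul_nonneg (mul_nonneg (hv l).le (sq_nonneg _)) (hb l))
            (pow_pos (hs l) 3).le
      set K : ℝ := ∑ l, v l * (if l = k then (1:ℝ) else ρi k l) ^ 2 * b l / (effY ρi ei l + b l) ^ 3 with hK_def
      have hne : (Finset.univ : Finset (Fin m)).Nonempty := ⟨k, Finset.mem_univ k⟩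
      set d : ℝ := min (min (ei k) (ε / (2 * K + 1)))
          (Finset.univ.inf' hne fun l => (effY ρi ei l + b l) / (2 * ((if l = k then (1:ℝ) else ρi k l) + 1))) with hd_def
      have hd : 0 < d := by
        refine lt_min (lt_min hek (div_pos hε (by linarith))) ?_
        rw [Finset.lt_inf'_iff]
        intro l _
        exact div_pos (hs l) (by have := hA l; linarith)
      have hdle : ∀ l, 2 * (d * (if l = k then (1:ℝ) else ρi k l)) ≤ (effY ρi ei l + b l) := by
        intro l
        have h1 : d ≤ (effY ρi ei l + b l) / (2 * ((if l = k then (1:ℝ) else ρi k l) + 1)) :=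
          le_trans (min_le_right _ _) (Finset.inf'_le _ (Finset.mem_univ l))
        have hA' := hA l
        have hsl := hs l
        rw [le_div_iff₀ (by linarith : (0:ℝ) < 2 * ((if l = k then (1:ℝ) else ρi k l) + 1))] at h1
        nlinarith [hd.le]
      have hpos : ∀ l, 0 < (effY ρi ei l + b l) + -d * (if l = k then (1:ℝ) else ρi k l) := by
        intro l
        have h1 := hdle l
        have h2 : 0 ≤ d * (if l = k then (1:ℝ) else ρi k l) := mul_nonneg hd.le (hA l)
        have := hs l
        nlinarith
      have hdk : d ≤ ei k := le_trans (min_le_left _ _) (min_le_left _ _)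
      have H := hdev (-d) hpos (by linarith)
      have hT : ci ≤ ∑ l, v l * ((if l = k then (1:ℝ) else ρi k l) * b l /
            (((effY ρi ei l + b l) + -d * (if l = k then (1:ℝ) else ρi k l)) * (effY ρi ei l + b l))) := by
        have H' : d * ci ≤ d * ∑ l, v l * ((if l = k then (1:ℝ) else ρi k l) * b l /
            (((effY ρi ei l + b l) + -d * (if l = k then (1:ℝ) else ρi k l)) * (effY ρi ei l + b l))) := by nlinarith [H]
        exact le_of_mul_le_mul_left H' hd
      have hper : ∀ l ∈ Finset.univ,
          v l * ((if l = k then (1:ℝ) else ρi k l) * b l /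
              (((effY ρi ei l + b l) + -d * (if l = k then (1:ℝ) else ρi k l)) * (effY ρi ei l + b l)))
            ≤ (if l = k then (1:ℝ) else ρi k l) * (v l * b l / (effY ρi ei l + b l) ^ 2) + d * (2 * (v l * (if l = k then (1:ℝ) else ρi k l) ^ 2 * b l / (effY ρi ei l + b l) ^ 3)) := fun l _ =>
        perturb_ub (v l) ((if l = k then (1:ℝ) else ρi k l)) (b l) ((effY ρi ei l + b l)) d
          (hv l).le (hA l) (hb l) (hs l) hd.le (hdle l)
      have hsum := Finset.sum_le_sum hper
      rw [Finset.sum_add_distrib, ← Finset.mul_sum, ← Finset.mul_sum, ← hK_def] at hsum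
      have h1 : d ≤ ε / (2 * K + 1) := le_trans (min_le_left _ _) (min_le_right _ _)
      rw [le_div_iff₀ (by linarith : (0:ℝ) < 2 * K + 1)] at h1
      have hdK : d * (2 * K) ≤ ε := by nlinarith [hd.le]
      linarith
    have hsplit : (∑ l, (if l = k then (1:ℝ) else ρi k l) * (v l * b l / (effY ρi ei l + b l) ^ 2))
        = v k * b k / (effY ρi ei k + b k) ^ 2
          + ∑ l ∈ Finset.univ.erase k,
              ρi k l * (v l * b l / (effY ρi ei l + b l) ^ 2) :=
      sum_split _ _ k
    rw [hsplit] at goalA goalB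
    exact ⟨goalA, fun h => le_antisymm goalA (goalB h)⟩
  · -- KKT ⇒ Nash
    intro hkkt e' he'
    have hcb : ∀ l ∈ Finset.univ,
        v l * tullock 1 (effY ρi e' l) (b l)
          ≤ v l * tullock 1 (effY ρi ei l) (b l)
            + (v l * b l / (effY ρi ei l + b l) ^ 2) * (effY ρi e' l - effY ρi ei l) := by
      intro l _
      rw [tullock_one, tullock_one]
      have h := concave_bound (effY ρi ei l) (effY ρi e' l) (b l)
        (effY_nonneg ρi hρi e' he' l) (hb l) (hs l)
      calc v l * (effY ρi e' l / (effY ρi e' l + b l))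
          ≤ v l * (effY ρi ei l / (effY ρi ei l + b l)
              + b l * (effY ρi e' l - effY ρi ei l) / (effY ρi ei l + b l) ^ 2) :=
            mul_le_mul_of_nonneg_left h (hv l).le
        _ = v l * (effY ρi ei l / (effY ρi ei l + b l))
              + (v l * b l / (effY ρi ei l + b l) ^ 2) * (effY ρi e' l - effY ρi ei l) := by ring
    have h1 := Finset.sum_le_sum hcb
    rw [Finset.sum_add_distrib] at h1
    have hyd : ∀ l ∈ Finset.univ, (v l * b l / (effY ρi ei l + b l) ^ 2) * (effY ρi e' l - effY ρi ei l)
        = ∑ j, (v l * b l / (effY ρi ei l + b l) ^ 2) * ((if j = l then (1:ℝ) else ρi j l) * (e' j - ei j)) := by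
      intro l _
      rw [effY_apply_sum ρi e' l, effY_apply_sum ρi ei l, ← Finset.sum_sub_distrib,
        ← Finset.mul_sum]
      congr 1
      exact Finset.sum_congr rfl fun j _ => by ring
    have hlin : (∑ l, (v l * b l / (effY ρi ei l + b l) ^ 2) * (effY ρi e' l - effY ρi ei l))
        = ∑ j, (e' j - ei j) *
            (v j * b j / (effY ρi ei j + b j) ^ 2
              + ∑ l ∈ Finset.univ.erase j,
                  ρi j l * (v l * b l / (effY ρi ei l + b l) ^ 2)) := by
      rw [Finset.sum_congr rfl hyd, Finset.sum_comm]
      refine Finset.sum_congr rfl fun j _ => ?_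
      have : ∀ l ∈ Finset.univ, (v l * b l / (effY ρi ei l + b l) ^ 2) * ((if j = l then (1:ℝ) else ρi j l) * (e' j - ei j))
          = (e' j - ei j) * ((if l = j then (1:ℝ) else ρi j l) * (v l * b l / (effY ρi ei l + b l) ^ 2)) := by
        intro l _
        by_cases h : l = j
        · subst h; simp only [if_pos rfl]; ring
        · rw [if_neg h, if_neg (Ne.symm h)]; ring
      rw [Finset.sum_congr rfl this, ← Finset.mul_sum,
        sum_split (fun l => v l * b l / (effY ρi ei l + b l) ^ 2) (fun l => ρi j l) j]
    have hneg : ∀ j ∈ Finset.univ, (e' j - ei j) *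
        ((v j * b j / (effY ρi ei j + b j) ^ 2
          + ∑ l ∈ Finset.univ.erase j,
              ρi j l * (v l * b l / (effY ρi ei l + b l) ^ 2)) - ci) ≤ 0 := by
      intro j _
      rcases (hei j).eq_or_lt with h | h
      · have hkl := (hkkt j).1
        have h0 : 0 ≤ e' j - ei j := by rw [← h]; simpa using he' j
        exact mul_nonpos_of_nonneg_of_nonpos h0 (by linarith)
      · rw [(hkkt j).2 h]
        simp
    have h2 := Finset.sum_le_sum hneg
    have h3 : (∑ j, (e' j - ei j) *
        ((v j * b j / (effY ρi ei j + b j) ^ 2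
          + ∑ l ∈ Finset.univ.erase j,
              ρi j l * (v l * b l / (effY ρi ei l + b l) ^ 2)) - ci))
        = (∑ j, (e' j - ei j) *
            (v j * b j / (effY ρi ei j + b j) ^ 2
              + ∑ l ∈ Finset.univ.erase j,
                  ρi j l * (v l * b l / (effY ρi ei l + b l) ^ 2)))
          - ci * ((∑ j, e' j) - ∑ j, ei j) := by
      have hci : ci * ((∑ j, e' j) - ∑ j, ei j) = ∑ j, ci * (e' j - ei j) := by
        rw [← Finset.sum_sub_distrib, Finset.mul_sum]
      rw [hci, ← Finset.sum_sub_distrib]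
      exact Finset.sum_congr rfl fun j _ => by ring
    simp only [Finset.sum_const_zero] at h2
    rw [h3, ← hlin] at h2
    linarith

/-- first-order (KKT) characterization of Nash equilibrium for γ = 1. -/
theorem nash_iff_kkt
    (m : ℕ)
    (v : Fin m → ℝ) (hv : ∀ k, 0 < v k)
    (c : Fin 2 → ℝ) (hc : ∀ i, 0 < c i)
    (ρ : Fin 2 → Matrix (Fin m) (Fin m) ℝ)
    (hρ : ∀ i k l, 0 ≤ ρ i k l) (hρd : ∀ i k, ρ i k k = 0)
    (e : Fin 2 → Fin m → ℝ) (he : ∀ i k, 0 ≤ e i k)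
    (hy : ∀ k, 0 < effY (ρ 0) (e 0) k + effY (ρ 1) (e 1) k) :
    IsNashEq 1 v c ρ e ↔
      ∀ (i : Fin 2) (k : Fin m),
        (v k * effY (ρ (1 - i)) (e (1 - i)) k /
            (effY (ρ 0) (e 0) k + effY (ρ 1) (e 1) k) ^ 2
          + ∑ l ∈ Finset.univ.erase k,
              ρ i k l * (v l * effY (ρ (1 - i)) (e (1 - i)) l /
                (effY (ρ 0) (e 0) l + effY (ρ 1) (e 1) l) ^ 2) ≤ c i)
        ∧ (0 < e i k →
            v k * effY (ρ (1 - i)) (e (1 - i)) k /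
                (effY (ρ 0) (e 0) k + effY (ρ 1) (e 1) k) ^ 2
              + ∑ l ∈ Finset.univ.erase k,
                  ρ i k l * (v l * effY (ρ (1 - i)) (e (1 - i)) l /
                    (effY (ρ 0) (e 0) l + effY (ρ 1) (e 1) l) ^ 2) = c i) := by
  have hb : ∀ i : Fin 2, ∀ l, 0 ≤ effY (ρ (1 - i)) (e (1 - i)) l := fun i =>
    effY_nonneg _ (hρ (1 - i)) _ (he (1 - i))
  have hs : ∀ i : Fin 2, ∀ l, 0 < effY (ρ i) (e i) l + effY (ρ (1 - i)) (e (1 - i)) l := by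
    intro i
    fin_cases i
    · simpa using hy
    · intro l
      have := hy l
      norm_num
      linarith
  have hsq : ∀ i : Fin 2, ∀ l : Fin m,
      (effY (ρ i) (e i) l + effY (ρ (1 - i)) (e (1 - i)) l) ^ 2
        = (effY (ρ 0) (e 0) l + effY (ρ 1) (e 1) l) ^ 2 := by
    intro i
    fin_cases i
    · intro l; norm_num
    · intro l; norm_num; ring
  have hDeq : ∀ i : Fin 2, ∀ k : Fin m,
      v k * effY (ρ (1 - i)) (e (1 - i)) k
          / (effY (ρ i) (e i) k + effY (ρ (1 - i)) (e (1 - i)) k) ^ 2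
        + ∑ l ∈ Finset.univ.erase k, ρ i k l * (v l * effY (ρ (1 - i)) (e (1 - i)) l
            / (effY (ρ i) (e i) l + effY (ρ (1 - i)) (e (1 - i)) l) ^ 2)
      = v k * effY (ρ (1 - i)) (e (1 - i)) k
          / (effY (ρ 0) (e 0) k + effY (ρ 1) (e 1) k) ^ 2
        + ∑ l ∈ Finset.univ.erase k, ρ i k l * (v l * effY (ρ (1 - i)) (e (1 - i)) l
            / (effY (ρ 0) (e 0) l + effY (ρ 1) (e 1) l) ^ 2) := by
    intro i k
    rw [hsq i k]
    congr 1
    exact Finset.sum_congr rfl fun l _ => by rw [hsq i l]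
  have hne : ∀ i : Fin 2, (1 - i) ≠ i := by decide
  have hpay : ∀ (i : Fin 2) (e' : Fin m → ℝ),
      (payoff 1 v c ρ (Function.update e i e') i ≤ payoff 1 v c ρ e i) ↔
      ((∑ l, v l * tullock 1 (effY (ρ i) e' l) (effY (ρ (1 - i)) (e (1 - i)) l))
          - c i * ∑ l, e' l
        ≤ (∑ l, v l * tullock 1 (effY (ρ i) (e i) l) (effY (ρ (1 - i)) (e (1 - i)) l))
          - c i * ∑ l, e i l) := by
    intro i e'
    simp only [payoff, Function.update_self, Function.update_of_ne (hne i)]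
  constructor
  · intro hN i k
    obtain ⟨-, hbr⟩ := hN
    have hbr' : ∀ e' : Fin m → ℝ, (∀ k, 0 ≤ e' k) →
        (∑ l, v l * tullock 1 (effY (ρ i) e' l) (effY (ρ (1 - i)) (e (1 - i)) l))
            - c i * ∑ l, e' l
          ≤ (∑ l, v l * tullock 1 (effY (ρ i) (e i) l) (effY (ρ (1 - i)) (e (1 - i)) l))
            - c i * ∑ l, e i l := fun e' he' => (hpay i e').mp (hbr i e' he')
    have hres := (key v hv (c i) (ρ i) (hρ i) (effY (ρ (1 - i)) (e (1 - i)))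
      (hb i) (e i) (he i) (hs i)).mp hbr' k
    exact ⟨by rw [← hDeq i k]; exact hres.1, fun h => by rw [← hDeq i k]; exact hres.2 h⟩
  · intro hkkt
    refine ⟨he, fun i e' he' => ?_⟩
    have hk' : ∀ k, (v k * effY (ρ (1 - i)) (e (1 - i)) k
          / (effY (ρ i) (e i) k + effY (ρ (1 - i)) (e (1 - i)) k) ^ 2
        + ∑ l ∈ Finset.univ.erase k, ρ i k l * (v l * effY (ρ (1 - i)) (e (1 - i)) l
            / (effY (ρ i) (e i) l + effY (ρ (1 - i)) (e (1 - i)) l) ^ 2) ≤ c i)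
        ∧ (0 < e i k → v k * effY (ρ (1 - i)) (e (1 - i)) k
          / (effY (ρ i) (e i) k + effY (ρ (1 - i)) (e (1 - i)) k) ^ 2
        + ∑ l ∈ Finset.univ.erase k, ρ i k l * (v l * effY (ρ (1 - i)) (e (1 - i)) l
            / (effY (ρ i) (e i) l + effY (ρ (1 - i)) (e (1 - i)) l) ^ 2) = c i) :=
      fun k => ⟨by rw [hDeq i k]; exact (hkkt i k).1,
        fun h => by rw [hDeq i k]; exact (hkkt i k).2 h⟩
    have hbr' := (key v hv (c i) (ρ i) (hρ i) (effY (ρ (1 - i)) (e (1 - i)))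
      (hb i) (e i) (he i) (hs i)).mpr hk'
    exact (hpay i e').mpr (hbr' e' he')
end

section
/- In the two-player interconnected contest with Tullock contest success function with parameter γ ∈ (0,1], suppose m ≥ 2, c_2 ≥ c_1 > 0, and v^k = v > 0 for all k ∈ B. Let ρ_1 be the empty network (ρ_1^{l,k} = 0 for all l ≠ k) and let ρ_2 be the complete directed network with ρ_2^{l,k} = (c_2 − c_1)/((m−1) c_1) for all l ≠ k. Then the profile in which e_i^k = γ v/(4 c_i) for every player i and every battlefield k is a Nash equilibrium; in it every winning probability equals 1/2, and the total effort of player i equals m γ v/(4 c_i), which is the maximal possible equilibrium total effort of player i over all pairs of spillover networks. -/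
open Finset Matrix

lemma bern (γ t : ℝ) (hγ0 : 0 < γ) (hγ1 : γ ≤ 1) (ht : 0 ≤ t) :
    t ^ γ ≤ 1 + γ * (t - 1) := by
  have h := Real.geom_mean_le_arith_mean2_weighted hγ0.le (by linarith : (0:ℝ) ≤ 1 - γ)
    ht zero_le_one (by ring)
  rw [Real.one_rpow, mul_one] at h
  linarith

lemma key_s13 (γ v c a x : ℝ) (hγ0 : 0 < γ) (hγ1 : γ ≤ 1) (hv : 0 < v) (hc : 0 < c)
    (ha : 4 * c * a = γ * v) (hx : 0 ≤ x) :
    v * (x ^ γ / (x ^ γ + a ^ γ)) - c * x ≤ v / 2 - c * a := by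
  have ha0 : 0 < a := by nlinarith
  set t := x / a with htdef
  have ht0 : 0 ≤ t := div_nonneg hx ha0.le
  have hxt : x = t * a := by rw [htdef]; exact (div_mul_cancel₀ x ha0.ne').symm
  have hs : x ^ γ = t ^ γ * a ^ γ := by rw [hxt, Real.mul_rpow ht0 ha0.le]
  have hA : 0 < a ^ γ := Real.rpow_pos_of_pos ha0 γ
  have hT : 0 ≤ t ^ γ := Real.rpow_nonneg ht0 γ
  have hB : t ^ γ ≤ 1 + γ * (t - 1) := bern γ t hγ0 hγ1 ht0
  have h2 : 2 * (t ^ γ - 1) ≤ γ * (t - 1) * (t ^ γ + 1) := by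
    nlinarith [sq_nonneg (γ * (t - 1)), sq_nonneg (t ^ γ - 1), mul_nonneg hT hT]
  have hlhs : v * ((t ^ γ * a ^ γ) / (t ^ γ * a ^ γ + a ^ γ)) - v / 2
      = v * (t ^ γ - 1) / (2 * (t ^ γ + 1)) := by
    field_simp
    ring
  rw [hs, hxt]
  have hgoal : v * (t ^ γ - 1) / (2 * (t ^ γ + 1)) ≤ c * (t * a) - c * a := by
    rw [div_le_iff₀ (by positivity : (0:ℝ) < 2 * (t ^ γ + 1))]
    nlinarith [mul_le_mul_of_nonneg_left h2 hv.le]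
  linarith

lemma tullockDeriv (γ y z : ℝ) (hγ0 : 0 < γ) (hy : 0 ≤ y) (hz : 0 ≤ z) :
    HasDerivAt (fun t : ℝ => tullock γ (t * y) z)
      (γ * (y ^ γ * z ^ γ / (y ^ γ + z ^ γ) ^ 2)) 1 := by
  rcases eq_or_lt_of_le hy with h0 | hy0
  · have hfun : (fun t : ℝ => tullock γ (t * y) z) = fun _ => 0 := by
      funext t
      simp [tullock, ← h0, Real.zero_rpow hγ0.ne']
    rw [hfun, ← h0]
    simpa [Real.zero_rpow hγ0.ne'] using hasDerivAt_const (1:ℝ) (0:ℝ)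
  · set Y := y ^ γ with hYdef
    set Z := z ^ γ with hZdef
    have hY : 0 < Y := Real.rpow_pos_of_pos hy0 γ
    have hZ : 0 ≤ Z := Real.rpow_nonneg hz γ
    have h1 : HasDerivAt (fun t : ℝ => t * y) y 1 := hasDerivAt_mul_const y
    have h2 : HasDerivAt (fun u : ℝ => u ^ γ) (γ * y ^ (γ - 1)) y :=
      Real.hasDerivAt_rpow_const (Or.inl hy0.ne')
    have h2' : HasDerivAt (fun u : ℝ => u ^ γ) (γ * y ^ (γ - 1)) ((fun t : ℝ => t * y) 1) := by
      simpa using h2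
    have h3 : HasDerivAt (fun t : ℝ => (t * y) ^ γ) (γ * y ^ (γ - 1) * y) 1 := by
      exact h2'.comp (1:ℝ) h1
    have hds : γ * y ^ (γ - 1) * y = γ * Y := by
      rw [hYdef, mul_assoc, ← Real.rpow_add_one hy0.ne' (γ - 1)]
      ring_nf
    rw [hds] at h3
    have h4 : HasDerivAt (fun t : ℝ => (t * y) ^ γ + z ^ γ) (γ * Y) 1 := h3.add_const _
    have hden : (fun t : ℝ => (t * y) ^ γ + z ^ γ) 1 ≠ 0 := by
      simp only [one_mul]
      positivity
    have h5 := h3.div h4 hden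
    have heq : (fun t : ℝ => (t * y) ^ γ / ((t * y) ^ γ + z ^ γ))
        = fun t : ℝ => tullock γ (t * y) z := rfl
    have h5 : HasDerivAt (fun t : ℝ => tullock γ (t * y) z) _ 1 := h5
    convert h5 using 1
    simp only [one_mul, ← hYdef, ← hZdef]
    field_simp
    ring

/-- effort-maximizing network design with equal battlefield
values: empty network for the low-cost player, complete directed network with
spillover `(c₂ - c₁)/((m-1) c₁)` for the high-cost player.  The symmetric
profile `e_i^k = γ v/(4 c_i)` is a Nash equilibrium, each winning probability
is `1/2`, total effort of player `i` is `m γ v/(4 c_i)`, and this is maximal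
over all pairs of spillover networks. -/
theorem max_effort_network_design
    (m : ℕ) (hm : 2 ≤ m) (γ : ℝ) (hγ0 : 0 < γ) (hγ1 : γ ≤ 1)
    (v : ℝ) (hv : 0 < v)
    (c : Fin 2 → ℝ) (hc0 : 0 < c 0) (hc01 : c 0 ≤ c 1)
    (ρ : Fin 2 → Matrix (Fin m) (Fin m) ℝ)
    (hρ0 : ρ 0 = 0)
    (hρ1 : ∀ l k, ρ 1 l k = if l = k then 0 else (c 1 - c 0) / (((m : ℝ) - 1) * c 0))
    (e : Fin 2 → Fin m → ℝ)
    (hedef : ∀ i k, e i k = γ * v / (4 * c i)) :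
    IsNashEq γ (fun _ => v) c ρ e ∧
    (∀ (i : Fin 2) (k : Fin m), eqProb γ ρ e i k = 1 / 2) ∧
    (∀ i : Fin 2, ∑ k, e i k = m * γ * v / (4 * c i)) ∧
    (∀ (ρ' : Fin 2 → Matrix (Fin m) (Fin m) ℝ),
      (∀ i k l, 0 ≤ ρ' i k l) → (∀ i k, ρ' i k k = 0) →
      ∀ e' : Fin 2 → Fin m → ℝ, IsNashEq γ (fun _ => v) c ρ' e' →
      ∀ i : Fin 2, ∑ k, e' i k ≤ m * γ * v / (4 * c i)) := by
  have hc1 : 0 < c 1 := lt_of_lt_of_le hc0 hc01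
  have hci : ∀ i : Fin 2, 0 < c i := by
    intro i; fin_cases i <;> assumption
  set a := γ * v / (4 * c 0) with hadef
  set b := γ * v / (4 * c 1) with hbdef
  have ha0 : 0 < a := by positivity
  have hb0 : 0 < b := by positivity
  have hca : 4 * c 0 * a = γ * v := by rw [hadef]; field_simp
  have hcb : c 1 * b = c 0 * a := by
    rw [hadef, hbdef]; field_simp
  have hmR : (2:ℝ) ≤ (m:ℝ) := by exact_mod_cast hm
  have hm1 : (m:ℝ) - 1 ≠ 0 := by linarith
  have hcard : ∀ k : Fin m, ((Finset.univ.erase k).card : ℝ) = (m:ℝ) - 1 := by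
    intro k
    rw [Finset.card_erase_of_mem (Finset.mem_univ k)]
    rw [Finset.card_univ, Fintype.card_fin]
    rw [Nat.cast_sub (by omega)]
    norm_num
  set θ := (c 1 - c 0) / (((m:ℝ) - 1) * c 0) with hθdef
  have hθ0 : 0 ≤ θ := by
    apply div_nonneg (by linarith)
    nlinarith
  -- effective equilibrium efforts
  have hY0 : ∀ k, effY (ρ 0) (e 0) k = a := by
    intro k
    simp [effY, hρ0, hedef 0 k, hadef]
  have hY1 : ∀ k, effY (ρ 1) (e 1) k = a := by
    intro k
    have hsum : ∑ l ∈ Finset.univ.erase k, ρ 1 l k * e 1 l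
        = ((m:ℝ) - 1) * (θ * b) := by
      rw [Finset.sum_congr rfl (fun l hl => ?_), Finset.sum_const, nsmul_eq_mul, hcard]
      rw [hρ1 l k, if_neg (Finset.mem_erase.mp hl).1, hedef 1 l]
    rw [effY, hsum, hedef 1 k]
    rw [hθdef, hbdef, hadef]
    field_simp
    ring
  have htaa : tullock γ a a = 1 / 2 := by
    have hA : 0 < a ^ γ := Real.rpow_pos_of_pos ha0 γ
    rw [tullock, div_eq_iff (by positivity)]
    ring
  -- equilibrium payoffs
  have h10 : (1 - 0 : Fin 2) = 1 := by decide
  have h11 : (1 - 1 : Fin 2) = 0 := by decide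
  have hEpay : ∀ i : Fin 2, payoff γ (fun _ => v) c ρ e i = m * (v / 2 - c 0 * a) := by
    intro i
    fin_cases i
    · show payoff γ (fun _ => v) c ρ e 0 = _
      rw [payoff, h10]
      rw [Finset.sum_congr rfl (fun k _ => by rw [hY0 k, hY1 k, htaa])]
      rw [Finset.sum_congr rfl (fun k _ => hedef 0 k)]
      simp [Finset.sum_const, Finset.card_univ]
      rw [hadef]
      field_simp
    · show payoff γ (fun _ => v) c ρ e 1 = _
      rw [payoff, h11]
      rw [Finset.sum_congr rfl (fun k _ => by rw [hY0 k, hY1 k, htaa])]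
      rw [Finset.sum_congr rfl (fun k _ => hedef 1 k)]
      simp [Finset.sum_const, Finset.card_univ]
      rw [hadef]
      field_simp
  -- key bound on deviation payoffs
  have hsum_le : ∀ (x : Fin m → ℝ), (∀ k, 0 ≤ x k) →
      (∑ k, (v * tullock γ (x k) a - c 0 * x k)) ≤ m * (v / 2 - c 0 * a) := by
    intro x hx
    have h1 : ∀ k ∈ Finset.univ, v * tullock γ (x k) a - c 0 * x k ≤ v / 2 - c 0 * a := by
      intro k _
      exact key_s13 γ v (c 0) a (x k) hγ0 hγ1 hv hc0 hca (hx k)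
    calc (∑ k, (v * tullock γ (x k) a - c 0 * x k))
        ≤ ∑ _k : Fin m, (v / 2 - c 0 * a) := Finset.sum_le_sum h1
      _ = m * (v / 2 - c 0 * a) := by
          rw [Finset.sum_const, Finset.card_univ, Fintype.card_fin, nsmul_eq_mul]
  have hNash : IsNashEq γ (fun _ => v) c ρ e := by
    constructor
    · intro i k
      rw [hedef i k]
      have := hci i
      positivity
    · intro i e'' he''
      fin_cases i
      · show payoff γ (fun _ => v) c ρ (Function.update e 0 e'') 0 ≤ payoff γ (fun _ => v) c ρ e 0
        rw [hEpay 0, payoff, h10]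
        rw [Function.update_self, Function.update_of_ne (by decide : (1:Fin 2) ≠ 0)]
        have heff : ∀ k, effY (ρ 0) e'' k = e'' k := by
          intro k; simp [effY, hρ0]
        rw [Finset.sum_congr rfl (fun k _ => by rw [heff k, hY1 k])]
        have : (∑ k, v * tullock γ (e'' k) a) - c 0 * ∑ k, e'' k
            = ∑ k, (v * tullock γ (e'' k) a - c 0 * e'' k) := by
          rw [Finset.sum_sub_distrib, Finset.mul_sum]
        rw [this]
        exact hsum_le e'' he''
      · show payoff γ (fun _ => v) c ρ (Function.update e 1 e'') 1 ≤ payoff γ (fun _ => v) c ρ e 1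
        rw [hEpay 1, payoff, h11]
        rw [Function.update_self, Function.update_of_ne (by decide : (0:Fin 2) ≠ 1)]
        set Y : Fin m → ℝ := fun k => effY (ρ 1) e'' k with hYdef
        set S := ∑ k, e'' k with hSdef
        have hYnn : ∀ k, 0 ≤ Y k := by
          intro k
          apply add_nonneg (he'' k)
          apply Finset.sum_nonneg
          intro l hl
          rw [hρ1 l k, if_neg (Finset.mem_erase.mp hl).1]
          exact mul_nonneg hθ0 (he'' l)
        have hYk : ∀ k, Y k = e'' k + θ * (S - e'' k) := by
          intro k
          rw [hYdef]
          show effY (ρ 1) e'' k = _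
          rw [effY]
          congr 1
          rw [Finset.sum_congr rfl (fun l hl => by
            rw [hρ1 l k, if_neg (Finset.mem_erase.mp hl).1]), ← Finset.mul_sum,
            Finset.sum_erase_eq_sub (Finset.mem_univ k), hSdef]
        have hsumY : c 0 * ∑ k, Y k = c 1 * S := by
          rw [Finset.sum_congr rfl (fun k _ => hYk k)]
          rw [Finset.sum_add_distrib, ← Finset.mul_sum, Finset.sum_sub_distrib,
            Finset.sum_const, Finset.card_univ, Fintype.card_fin, nsmul_eq_mul, ← hSdef]
          rw [hθdef]
          field_simp
          ring
        have hc1S : ∑ k, c 0 * Y k = c 1 * ∑ k, e'' k := by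
          rw [← Finset.mul_sum, hsumY]
        have heq2 : (∑ k, v * tullock γ (effY (ρ 1) e'' k) (effY (ρ 0) (e 0) k)) - c 1 * ∑ k, e'' k
            = ∑ k, (v * tullock γ (Y k) a - c 0 * Y k) := by
          rw [Finset.sum_sub_distrib, hc1S]
          congr 1
          exact Finset.sum_congr rfl (fun k _ => by rw [hY0 k])
        rw [heq2]
        exact hsum_le Y hYnn
  refine ⟨hNash, ?_, ?_, ?_⟩
  · intro i k
    fin_cases i
    · show eqProb γ ρ e 0 k = 1 / 2
      rw [eqProb, h10, hY0 k, hY1 k, htaa]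
    · show eqProb γ ρ e 1 k = 1 / 2
      rw [eqProb, h11, hY0 k, hY1 k, htaa]
  · intro i
    rw [Finset.sum_congr rfl (fun k _ => hedef i k), Finset.sum_const, Finset.card_univ,
      Fintype.card_fin, nsmul_eq_mul]
    rw [mul_div_assoc]
    ring
  · -- maximality
    intro ρ' hρnn hρdiag e' hNE i
    obtain ⟨hnn, hbr⟩ := hNE
    have hji : (1 - i : Fin 2) ≠ i := by fin_cases i <;> decide
    set S := ∑ k, e' i k with hSdef
    have hS0 : 0 ≤ S := Finset.sum_nonneg (fun k _ => hnn i k)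
    set y : Fin m → ℝ := fun k => effY (ρ' i) (e' i) k with hydef
    set z : Fin m → ℝ := fun k => effY (ρ' (1 - i)) (e' (1 - i)) k with hzdef
    have hynn : ∀ k, 0 ≤ y k := by
      intro k
      apply add_nonneg (hnn i k)
      exact Finset.sum_nonneg fun l _ => mul_nonneg (hρnn i l k) (hnn i l)
    have hznn : ∀ k, 0 ≤ z k := by
      intro k
      apply add_nonneg (hnn (1 - i) k)
      exact Finset.sum_nonneg fun l _ => mul_nonneg (hρnn (1 - i) l k) (hnn (1 - i) l)
    set F : ℝ → ℝ := fun t => (∑ k, v * tullock γ (t * y k) (z k)) - c i * (t * S) with hFdef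
    have heffsmul : ∀ (t : ℝ) (k : Fin m),
        effY (ρ' i) (fun l => t * e' i l) k = t * y k := by
      intro t k
      show t * e' i k + ∑ l ∈ Finset.univ.erase k, ρ' i l k * (t * e' i l)
          = t * (e' i k + ∑ l ∈ Finset.univ.erase k, ρ' i l k * e' i l)
      rw [mul_add, Finset.mul_sum]
      congr 1
      exact Finset.sum_congr rfl fun l _ => by ring
    have hFpay : ∀ t : ℝ,
        payoff γ (fun _ => v) c ρ' (Function.update e' i (fun l => t * e' i l)) i = F t := by
      intro t
      rw [payoff, Function.update_self, Function.update_of_ne hji, hFdef]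
      congr 1
      · exact Finset.sum_congr rfl fun k _ => by rw [heffsmul t k]
      · rw [← Finset.mul_sum]
    have hF1 : F 1 = payoff γ (fun _ => v) c ρ' e' i := by
      rw [← hFpay 1]
      have h1 : (fun l => (1:ℝ) * e' i l) = e' i := by funext l; rw [one_mul]
      rw [h1, Function.update_eq_self]
    have hFle : ∀ t : ℝ, 0 < t → F t ≤ F 1 := by
      intro t ht
      rw [hF1, ← hFpay t]
      exact hbr i _ (fun k => mul_nonneg ht.le (hnn i k))
    have hmax : IsLocalMax F 1 := by
      have : ∀ᶠ t in nhds (1:ℝ), F t ≤ F 1 := by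
        filter_upwards [Ioi_mem_nhds (by norm_num : (0:ℝ) < 1)] with t ht
        exact hFle t ht
      exact this
    set D : Fin m → ℝ :=
      fun k => v * (γ * (y k ^ γ * z k ^ γ / (y k ^ γ + z k ^ γ) ^ 2)) with hDdef
    have hderiv : HasDerivAt F ((∑ k, D k) - c i * S) 1 := by
      have h1 : HasDerivAt (fun t : ℝ => ∑ k, v * tullock γ (t * y k) (z k)) (∑ k, D k) 1 := by
        apply HasDerivAt.fun_sum
        intro k _
        exact (tullockDeriv γ (y k) (z k) hγ0 (hynn k) (hznn k)).const_mul v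
      have h2 : HasDerivAt (fun t : ℝ => c i * (t * S)) (c i * S) 1 :=
        (hasDerivAt_mul_const S).const_mul (c i)
      exact h1.sub h2
    have hD0 : (∑ k, D k) - c i * S = 0 := by
      rw [← hderiv.deriv]
      exact hmax.deriv_eq_zero
    have hDle : ∀ k ∈ Finset.univ, D k ≤ v * γ / 4 := by
      intro k _
      have hYnn : 0 ≤ y k ^ γ := Real.rpow_nonneg (hynn k) γ
      have hZnn : 0 ≤ z k ^ γ := Real.rpow_nonneg (hznn k) γ
      have hq : y k ^ γ * z k ^ γ / (y k ^ γ + z k ^ γ) ^ 2 ≤ 1 / 4 := by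
        rcases eq_or_lt_of_le (add_nonneg hYnn hZnn) with h0 | hpos
        · have hy0 : y k ^ γ = 0 := by linarith
          rw [hy0, zero_mul, zero_div]
          norm_num
        · rw [div_le_iff₀ (by positivity)]
          nlinarith [sq_nonneg (y k ^ γ - z k ^ γ)]
      have h4 := mul_le_mul_of_nonneg_left hq (le_of_lt (mul_pos hv hγ0))
      simp only [hDdef]
      linarith
    have hsumD : ∑ k, D k ≤ m * (v * γ / 4) := by
      calc ∑ k, D k ≤ ∑ _k : Fin m, (v * γ / 4) := Finset.sum_le_sum hDle
        _ = m * (v * γ / 4) := by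
            rw [Finset.sum_const, Finset.card_univ, Fintype.card_fin, nsmul_eq_mul]
    have hciS : c i * S ≤ (m:ℝ) * (v * γ / 4) := by linarith
    have h4c : (0:ℝ) < c i := hci i
    clear_value S y z F D
    rw [le_div_iff₀ (by linarith : (0:ℝ) < 4 * c i)]
    linarith
end

section
/- In the two-player interconnected contest with Tullock contest success function with parameter γ ∈ (0,1], suppose m ≥ 2, c_1 > 0, c_2 > 0, and v^k = v > 0 for all k ∈ B. For every ε > 0 there exists λ_ε > 0 such that, when ρ_1 is the empty network (ρ_1^{l,k} = 0 for all l ≠ k) and ρ_2 is the complete directed network with ρ_2^{l,k} = λ_ε for all l ≠ k, in every Nash equilibrium of the resulting game the total effort of each player i ∈ {1,2} satisfies Σ_{k∈B} e_i^k < ε. -/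
open Finset Matrix

lemma myTullock_nonneg {γ y₁ y₂ : ℝ} (h₁ : 0 ≤ y₁) (h₂ : 0 ≤ y₂) :
    0 ≤ tullock γ y₁ y₂ :=
  div_nonneg (Real.rpow_nonneg h₁ _)
    (add_nonneg (Real.rpow_nonneg h₁ _) (Real.rpow_nonneg h₂ _))

lemma myTullock_le_one {γ y₁ y₂ : ℝ} (h₁ : 0 ≤ y₁) (h₂ : 0 ≤ y₂) :
    tullock γ y₁ y₂ ≤ 1 :=
  div_le_one_of_le₀ (le_add_of_nonneg_right (Real.rpow_nonneg h₂ _))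
    (add_nonneg (Real.rpow_nonneg h₁ _) (Real.rpow_nonneg h₂ _))

lemma myTullock_zero_left {γ : ℝ} (hγ : γ ≠ 0) (y : ℝ) : tullock γ 0 y = 0 := by
  simp [tullock, Real.zero_rpow hγ]

lemma myTullock_pair {γ y₁ y₂ : ℝ} (h₁ : 0 ≤ y₁) (h₂ : 0 ≤ y₂) :
    tullock γ y₂ y₁ ≤ 1 - tullock γ y₁ y₂ := by
  unfold tullock
  have hn₁ : 0 ≤ y₁ ^ γ := Real.rpow_nonneg h₁ γ
  have hn₂ : 0 ≤ y₂ ^ γ := Real.rpow_nonneg h₂ γ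
  rcases eq_or_lt_of_le (add_nonneg hn₁ hn₂) with h | h
  · have e₁ : y₁ ^ γ = 0 := by linarith [hn₁, hn₂]
    have e₂ : y₂ ^ γ = 0 := by linarith
    simp [e₁, e₂]
  · have key : y₂ ^ γ / (y₁ ^ γ + y₂ ^ γ) + y₁ ^ γ / (y₁ ^ γ + y₂ ^ γ) = 1 := by
      rw [← add_div, add_comm, div_self h.ne']
    rw [add_comm (y₂ ^ γ)]
    linarith

lemma myTullock_ge {γ x y z : ℝ} (hγ : 0 ≤ γ) (hx : 0 ≤ x) (hz : 0 < z) (hzy : z ≤ y) :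
    1 - (x / z) ^ γ ≤ tullock γ y x := by
  have hy : 0 < y := hz.trans_le hzy
  have hyγ : 0 < y ^ γ := Real.rpow_pos_of_pos hy γ
  have hzγ : 0 < z ^ γ := Real.rpow_pos_of_pos hz γ
  have hxγ : 0 ≤ x ^ γ := Real.rpow_nonneg hx γ
  have h1 : tullock γ y x = 1 - x ^ γ / (y ^ γ + x ^ γ) := by
    unfold tullock; field_simp; ring
  rw [h1, Real.div_rpow hx hz.le]
  have hzy' : z ^ γ ≤ y ^ γ + x ^ γ :=
    le_add_of_le_of_nonneg (Real.rpow_le_rpow hz.le hzy hγ) hxγ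
  have h2 : x ^ γ / (y ^ γ + x ^ γ) ≤ x ^ γ / z ^ γ := by gcongr
  linarith


set_option maxHeartbeats 1000000 in
/-- welfare-maximizing design: with an empty network for player 1
and a complete network with large enough spillover λ for player 2, equilibrium
total efforts can be made arbitrarily small. -/
theorem welfare_design_small_efforts
    (m : ℕ) (hm : 2 ≤ m) (γ : ℝ) (hγ0 : 0 < γ) (hγ1 : γ ≤ 1)
    (v : ℝ) (hv : 0 < v)
    (c : Fin 2 → ℝ) (hc : ∀ i, 0 < c i) :
    ∀ ε > (0 : ℝ), ∃ lam > (0 : ℝ),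
      ∀ ρ : Fin 2 → Matrix (Fin m) (Fin m) ℝ,
        ρ 0 = 0 →
        (∀ l k, ρ 1 l k = if l = k then 0 else lam) →
        ∀ e : Fin 2 → Fin m → ℝ, IsNashEq γ (fun _ => v) c ρ e →
        ∀ i : Fin 2, ∑ k, e i k < ε := by
  intro ε hε
  have hc0 := hc 0
  have hc1 := hc 1
  have hM2 : (2 : ℝ) ≤ (m : ℝ) := by exact_mod_cast hm
  have hM0 : (0 : ℝ) < (m : ℝ) := by linarith
  have hminpos : 0 < min (c 0) (c 1) := lt_min hc0 hc1
  set δ : ℝ := min (c 0) (c 1) * ε / 2 with hδdef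
  have hδ : 0 < δ := by positivity
  set t : ℝ := δ / (2 * c 1) with htdef
  have ht : 0 < t := by positivity
  set r : ℝ := (δ / (2 * v * m)) ^ (γ⁻¹ : ℝ) with hrdef
  have hr : 0 < r := Real.rpow_pos_of_pos (by positivity) _
  have hrγ : r ^ γ = δ / (2 * v * m) := by
    rw [hrdef, ← Real.rpow_mul (by positivity), inv_mul_cancel₀ hγ0.ne', Real.rpow_one]
  set K : ℝ := 2 * (v * m / c 0) with hKdef
  have hK : 0 < K := by positivity
  obtain ⟨lam, hlam1, hlamK⟩ : ∃ lam : ℝ, 1 ≤ lam ∧ K / (t * r) ≤ lam :=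
    ⟨max 1 (K / (t * r)), le_max_left _ _, le_max_right _ _⟩
  have hlampos : (0 : ℝ) < lam := lt_of_lt_of_le one_pos hlam1
  refine ⟨lam, hlampos, ?_⟩
  intro ρ hρ0 hρ1 e hNash
  obtain ⟨hnn, hdev⟩ := hNash
  have hann : ∀ k, 0 ≤ e 0 k := hnn 0
  have hbnn : ∀ k, 0 ≤ e 1 k := hnn 1
  -- effY facts
  have heffY0 : ∀ (x : Fin m → ℝ) k, effY (ρ 0) x k = x k := by
    intro x k; simp [effY, hρ0]
  have hYnn : ∀ k, 0 ≤ effY (ρ 1) (e 1) k := by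
    intro k
    refine add_nonneg (hbnn k) (Finset.sum_nonneg fun l hl => ?_)
    rw [hρ1]
    rw [if_neg (Finset.mem_erase.mp hl).1]
    exact mul_nonneg hlampos.le (hbnn l)
  -- step 1: player 1 deviation to zero
  have hdev0 := hdev 0 (fun _ => 0) (fun _ => le_refl 0)
  have hup0 : payoff γ (fun _ => v) c ρ (Function.update e 0 fun _ => 0) 0 = 0 := by
    unfold payoff
    rw [show (1 : Fin 2) - 0 = 1 by decide]
    rw [Function.update_self, Function.update_of_ne (by decide)]
    simp [heffY0, myTullock_zero_left hγ0.ne']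
  have hstep1 : c 0 * ∑ k, e 0 k ≤ ∑ k, v * tullock γ (e 0 k) (effY (ρ 1) (e 1) k) := by
    rw [hup0] at hdev0
    unfold payoff at hdev0
    rw [show (1 : Fin 2) - 0 = 1 by decide] at hdev0
    simp only [heffY0] at hdev0
    linarith
  -- step 2: bound on individual efforts of player 1
  have hA_le : ∑ k, e 0 k ≤ v * m / c 0 := by
    rw [le_div_iff₀ hc0, mul_comm]
    calc c 0 * ∑ k, e 0 k ≤ ∑ k, v * tullock γ (e 0 k) (effY (ρ 1) (e 1) k) := hstep1
      _ ≤ ∑ _k : Fin m, v * 1 :=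
          Finset.sum_le_sum fun k _ =>
            mul_le_mul_of_nonneg_left (myTullock_le_one (hann k) (hYnn k)) hv.le
      _ = v * m := by simp [mul_comm]
  have hak_le : ∀ k, e 0 k ≤ v * m / c 0 := fun k =>
    le_trans (Finset.single_le_sum (fun l _ => hann l) (Finset.mem_univ k)) hA_le
  -- step 4: player 2 deviation to uniform t/m
  have htm : (0 : ℝ) ≤ t / m := by positivity
  have hdev1 := hdev 1 (fun _ => t / m) (fun _ => htm)
  have heffY' : ∀ k : Fin m, effY (ρ 1) (fun _ => t / m) k
      = t / m + ((m : ℝ) - 1) * (lam * (t / m)) := by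
    intro k
    unfold effY
    rw [Finset.sum_congr rfl (fun l hl => by
      rw [hρ1, if_neg (Finset.mem_erase.mp hl).1])]
    rw [Finset.sum_const, Finset.card_erase_of_mem (Finset.mem_univ k),
      Finset.card_univ, Fintype.card_fin, nsmul_eq_mul]
    congr 1
    congr 1
    push_cast [Nat.cast_sub (by omega : 1 ≤ m)]
    ring
  have hz : (0 : ℝ) < lam * t / 2 := by positivity
  have hY'ge : ∀ k : Fin m, lam * t / 2 ≤ effY (ρ 1) (fun _ => t / m) k := by
    intro k
    rw [heffY' k]
    have h1 : t / m + ((m : ℝ) - 1) * (lam * (t / m)) ≥ ((m : ℝ) - 1) * (lam * (t / m)) := by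
      have : 0 ≤ t / m := htm
      linarith
    have h2 : lam * t / 2 ≤ ((m : ℝ) - 1) * (lam * (t / m)) := by
      have key : ((m : ℝ) - 1) * (lam * (t / m)) - lam * t / 2
          = lam * t * (((m : ℝ) - 2) / (2 * m)) := by
        field_simp
        ring
      have hnn2 : 0 ≤ lam * t * (((m : ℝ) - 2) / (2 * m)) :=
        mul_nonneg (mul_nonneg hlampos.le ht.le)
          (div_nonneg (by linarith) (by linarith))
      linarith
    linarith
  have hdevlb : ∀ k, 1 - (e 0 k / (lam * t / 2)) ^ γ
      ≤ tullock γ (effY (ρ 1) (fun _ => t / m) k) (e 0 k) :=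
    fun k => myTullock_ge hγ0.le (hann k) hz (hY'ge k)
  -- evaluate the deviation payoff
  have hup1 : payoff γ (fun _ => v) c ρ (Function.update e 1 fun _ => t / m) 1
      = (∑ k, v * tullock γ (effY (ρ 1) (fun _ => t / m) k) (e 0 k)) - c 1 * t := by
    unfold payoff
    rw [show (1 : Fin 2) - 1 = 0 by decide]
    rw [Function.update_self, Function.update_of_ne (by decide)]
    simp only [heffY0]
    congr 1
    rw [Finset.sum_const, Finset.card_univ, Fintype.card_fin, nsmul_eq_mul]
    rw [mul_div_cancel₀ _ hM0.ne']
  have hstep4 : (∑ k, v * (1 - (e 0 k / (lam * t / 2)) ^ γ)) - c 1 * t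
      ≤ (∑ k, v * (1 - tullock γ (e 0 k) (effY (ρ 1) (e 1) k))) - c 1 * ∑ k, e 1 k := by
    rw [hup1] at hdev1
    unfold payoff at hdev1
    rw [show (1 : Fin 2) - 1 = 0 by decide] at hdev1
    simp only [heffY0] at hdev1
    have lb : ∑ k, v * (1 - (e 0 k / (lam * t / 2)) ^ γ)
        ≤ ∑ k, v * tullock γ (effY (ρ 1) (fun _ => t / m) k) (e 0 k) :=
      Finset.sum_le_sum fun k _ => mul_le_mul_of_nonneg_left (hdevlb k) hv.le
    have ub : ∑ k, v * tullock γ (effY (ρ 1) (e 1) k) (e 0 k)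
        ≤ ∑ k, v * (1 - tullock γ (e 0 k) (effY (ρ 1) (e 1) k)) :=
      Finset.sum_le_sum fun k _ =>
        mul_le_mul_of_nonneg_left (myTullock_pair (hann k) (hYnn k)) hv.le
    linarith
  -- step 5: put everything together
  have hsum_rpow : ∑ k, v * (e 0 k / (lam * t / 2)) ^ γ ≤ δ / 2 := by
    have hbound : ∀ k : Fin m, (e 0 k / (lam * t / 2)) ^ γ ≤ δ / (2 * v * m) := by
      intro k
      rw [← hrγ]
      apply Real.rpow_le_rpow (div_nonneg (hann k) hz.le) _ hγ0.le
      rw [div_le_iff₀ hz]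
      have htr : (0 : ℝ) < t * r := mul_pos ht hr
      have h1 : K / (t * r) * (t * r) = K := div_mul_cancel₀ K htr.ne'
      have h2 : K ≤ lam * t * r := by
        calc K = K / (t * r) * (t * r) := h1.symm
          _ ≤ lam * (t * r) := mul_le_mul_of_nonneg_right hlamK htr.le
          _ = lam * t * r := by ring
      calc e 0 k ≤ v * m / c 0 := hak_le k
        _ = K / 2 := by rw [hKdef]; ring
        _ ≤ r * (lam * t) / 2 := by nlinarith
        _ = r * (lam * t / 2) := by ring
    calc ∑ k, v * (e 0 k / (lam * t / 2)) ^ γ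
        ≤ ∑ _k : Fin m, v * (δ / (2 * v * m)) :=
          Finset.sum_le_sum fun k _ => mul_le_mul_of_nonneg_left (hbound k) hv.le
      _ = (m : ℝ) * (v * (δ / (2 * v * m))) := by simp [mul_comm]
      _ = δ / 2 := by field_simp
  have hct : c 1 * t = δ / 2 := by rw [htdef]; field_simp
  have hfinal : c 0 * (∑ k, e 0 k) + c 1 * (∑ k, e 1 k) ≤ δ := by
    have expand1 : ∑ k, v * (1 - (e 0 k / (lam * t / 2)) ^ γ)
        = (∑ _k : Fin m, v) - ∑ k, v * (e 0 k / (lam * t / 2)) ^ γ := by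
      rw [← Finset.sum_sub_distrib]; congr 1; ext k; ring
    have expand2 : ∑ k, v * (1 - tullock γ (e 0 k) (effY (ρ 1) (e 1) k))
        = (∑ _k : Fin m, v) - ∑ k, v * tullock γ (e 0 k) (effY (ρ 1) (e 1) k) := by
      rw [← Finset.sum_sub_distrib]; congr 1; ext k; ring
    rw [expand1, expand2] at hstep4
    linarith
  -- conclude
  intro i
  have hB0 : 0 ≤ ∑ k, e 1 k := Finset.sum_nonneg fun k _ => hbnn k
  have hA0 : 0 ≤ ∑ k, e 0 k := Finset.sum_nonneg fun k _ => hann k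
  have hmin0 : min (c 0) (c 1) ≤ c 0 := min_le_left _ _
  have hmin1 : min (c 0) (c 1) ≤ c 1 := min_le_right _ _
  have hBnn : 0 ≤ c 1 * ∑ k, e 1 k := mul_nonneg hc1.le hB0
  have hAnn : 0 ≤ c 0 * ∑ k, e 0 k := mul_nonneg hc0.le hA0
  have hδ0 : δ ≤ c 0 * (ε / 2) := by
    rw [hδdef]
    have := mul_le_mul_of_nonneg_right hmin0 (by linarith : (0:ℝ) ≤ ε / 2)
    linarith [this]
  have hδ1 : δ ≤ c 1 * (ε / 2) := by
    rw [hδdef]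
    have := mul_le_mul_of_nonneg_right hmin1 (by linarith : (0:ℝ) ≤ ε / 2)
    linarith [this]
  fin_cases i
  · show ∑ k, e 0 k < ε
    have h0 : c 0 * (∑ k, e 0 k) ≤ c 0 * (ε / 2) := by linarith
    have := (mul_le_mul_iff_right₀ hc0).mp h0
    linarith
  · show ∑ k, e 1 k < ε
    have h1 : c 1 * (∑ k, e 1 k) ≤ c 1 * (ε / 2) := by linarith
    have := (mul_le_mul_iff_right₀ hc1).mp h1
    linarith
end

section
/- Suppose v² ≥ v¹ > 0, c₂ ≥ c₁ > 0, γ > 0, and either (i) c₂/c₁ < (v¹+v²)/v² and 0 ≤ λ₁ < ((v¹+v²)/v²)·(c₁/c₂) − 1, or (ii) c₂/c₁ ≥ (v¹+v²)/v² and λ₁ > v²/v¹. Then all four of the following quantities are strictly positive: (γ/c₁)·(λ₁ v² − v¹)/(4(λ₁ − 1)); (γ/c₁)·(λ₁ v¹ − v²)/(4(λ₁ − 1)); (γ/c₂)·(c₁(v¹+v²) − c₂ v²(λ₁+1))/(4(2c₁ − c₂(λ₁+1))); and (γ/c₂)·(c₁(v¹+v²) − c₂ v¹(λ₁+1))/(4(2c₁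 − c₂(λ₁+1))). -/
/-- Lemma on interior efforts, two battlefields. -/
theorem interior_efforts_two_battlefields
    (v₁ v₂ c₁ c₂ γ lam : ℝ)
    (hv : v₁ ≤ v₂) (hv1 : 0 < v₁) (hc : c₁ ≤ c₂) (hc1 : 0 < c₁) (hγ : 0 < γ)
    (h : (c₂ / c₁ < (v₁ + v₂) / v₂ ∧
            0 ≤ lam ∧ lam < (v₁ + v₂) / v₂ * (c₁ / c₂) - 1) ∨
         ((v₁ + v₂) / v₂ ≤ c₂ / c₁ ∧ v₂ / v₁ < lam)) :
    0 < γ / c₁ * ((lam * v₂ - v₁) / (4 * (lam - 1))) ∧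
    0 < γ / c₁ * ((lam * v₁ - v₂) / (4 * (lam - 1))) ∧
    0 < γ / c₂ * ((c₁ * (v₁ + v₂) - c₂ * v₂ * (lam + 1)) /
      (4 * (2 * c₁ - c₂ * (lam + 1)))) ∧
    0 < γ / c₂ * ((c₁ * (v₁ + v₂) - c₂ * v₁ * (lam + 1)) /
      (4 * (2 * c₁ - c₂ * (lam + 1)))) := by
  have hv2 : 0 < v₂ := lt_of_lt_of_le hv1 hv
  have hc2 : 0 < c₂ := lt_of_lt_of_le hc1 hc
  have hg1 : 0 < γ / c₁ := div_pos hγ hc1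
  have hg2 : 0 < γ / c₂ := div_pos hγ hc2
  rcases h with ⟨_, hl0, hl⟩ | ⟨hcc, hl⟩
  · -- case (i): lam < 1
    have h2 : lam + 1 < (v₁ + v₂) / v₂ * (c₁ / c₂) := by linarith
    rw [div_mul_div_comm, lt_div_iff₀ (by positivity)] at h2
    have key : c₂ * v₂ * (lam + 1) < c₁ * (v₁ + v₂) := by nlinarith
    have hlam1 : lam < 1 := by nlinarith [mul_le_mul_of_nonneg_right hc (by linarith : (0:ℝ) ≤ v₁ + v₂), mul_le_mul_of_nonneg_left hv hc2.le, mul_pos hc2 hv2]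
    have hn1 : lam * v₂ - v₁ < 0 := by nlinarith
    have hn2 : lam * v₁ - v₂ < 0 := by nlinarith
    have hd : 0 < 2 * c₁ - c₂ * (lam + 1) := by nlinarith
    refine ⟨mul_pos hg1 (div_pos_of_neg_of_neg hn1 (by linarith)),
      mul_pos hg1 (div_pos_of_neg_of_neg hn2 (by linarith)),
      mul_pos hg2 (div_pos (by nlinarith) (by linarith)),
      mul_pos hg2 (div_pos (by nlinarith) (by linarith))⟩
  · -- case (ii): lam > v₂/v₁ ≥ 1
    rw [div_lt_iff₀ hv1] at hl
    rw [div_le_div_iff₀ hv2 hc1] at hcc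
    have hlam1 : 1 < lam := by nlinarith
    have hn1 : 0 < lam * v₂ - v₁ := by nlinarith
    have hn2 : 0 < lam * v₁ - v₂ := by nlinarith
    have hd : 2 * c₁ - c₂ * (lam + 1) < 0 := by nlinarith
    refine ⟨mul_pos hg1 (div_pos hn1 (by linarith)),
      mul_pos hg1 (div_pos hn2 (by linarith)),
      mul_pos hg2 (div_pos_of_neg_of_neg (by nlinarith) (by linarith)),
      mul_pos hg2 (div_pos_of_neg_of_neg (by nlinarith) (by linarith))⟩
end

section
/- Suppose v³ ≥ v² ≥ v¹ > 0, c₂ ≥ c₁ > 0, γ > 0, c₂/c₁ < (v³+v²+v¹)/(v³+v²−v¹), and 0 ≤ λ₁ < ((v³+v²+v¹)/(v³+v²−v¹))·(c₁/c₂) − 1. Then all six of the following quantities are strictly positive: (γ/c₁)·(2v¹ − λ₁(v³+v²−v¹))/(4(2−λ₁)); (γ/c₁)·(2v² − λ₁(v³+v¹−v²))/(4(2−λ₁)); (γ/c₁)·(2v³ − λ₁(v²+v¹−v³))/(4(2−λ₁)); (γ/c₂)·(c₁(v³+v²+v¹) − c₂(v³+v²−v¹)(λ₁+1))/(4(3c₁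 − c₂(λ₁+1))); (γ/c₂)·(c₁(v³+v²+v¹) − c₂(v³+v¹−v²)(λ₁+1))/(4(3c₁ − c₂(λ₁+1))); and (γ/c₂)·(c₁(v³+v²+v¹) − c₂(v²+v¹−v³)(λ₁+1))/(4(3c₁ − c₂(λ₁+1))). -/
/-- Lemma on interior efforts, three battlefields, first case. -/
theorem interior_efforts_three_battlefields_case1
    (v₁ v₂ v₃ c₁ c₂ γ lam : ℝ)
    (hv21 : v₁ ≤ v₂) (hv32 : v₂ ≤ v₃) (hv1 : 0 < v₁)
    (hc : c₁ ≤ c₂) (hc1 : 0 < c₁) (hγ : 0 < γ)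
    (hcase : c₂ / c₁ < (v₃ + v₂ + v₁) / (v₃ + v₂ - v₁))
    (hlam0 : 0 ≤ lam)
    (hlam : lam < (v₃ + v₂ + v₁) / (v₃ + v₂ - v₁) * (c₁ / c₂) - 1) :
    0 < γ / c₁ * ((2 * v₁ - lam * (v₃ + v₂ - v₁)) / (4 * (2 - lam))) ∧
    0 < γ / c₁ * ((2 * v₂ - lam * (v₃ + v₁ - v₂)) / (4 * (2 - lam))) ∧
    0 < γ / c₁ * ((2 * v₃ - lam * (v₂ + v₁ - v₃)) / (4 * (2 - lam))) ∧
    0 < γ / c₂ * ((c₁ * (v₃ + v₂ + v₁) - c₂ * (v₃ + v₂ - v₁) * (lam + 1)) /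
      (4 * (3 * c₁ - c₂ * (lam + 1)))) ∧
    0 < γ / c₂ * ((c₁ * (v₃ + v₂ + v₁) - c₂ * (v₃ + v₁ - v₂) * (lam + 1)) /
      (4 * (3 * c₁ - c₂ * (lam + 1)))) ∧
    0 < γ / c₂ * ((c₁ * (v₃ + v₂ + v₁) - c₂ * (v₂ + v₁ - v₃) * (lam + 1)) /
      (4 * (3 * c₁ - c₂ * (lam + 1)))) := by
  have hc2 : 0 < c₂ := lt_of_lt_of_le hc1 hc
  have hD : 0 < v₃ + v₂ - v₁ := by linarith
  have hS : 0 < v₃ + v₂ + v₁ := by linarith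
  have hlam' : lam + 1 < (v₃ + v₂ + v₁) * c₁ / ((v₃ + v₂ - v₁) * c₂) := by
    rw [div_mul_div_comm] at hlam; linarith
  have key : (lam + 1) * ((v₃ + v₂ - v₁) * c₂) < (v₃ + v₂ + v₁) * c₁ :=
    (lt_div_iff₀ (by positivity)).mp hlam'
  -- (lam+1)(v₃+v₂-v₁) < v₃+v₂+v₁ since c₁ ≤ c₂
  have h1 : (lam + 1) * (v₃ + v₂ - v₁) < v₃ + v₂ + v₁ := by
    nlinarith [key, mul_le_mul_of_nonneg_left hc hS.le]
  have h1num : lam * (v₃ + v₂ - v₁) < 2 * v₁ := by nlinarith [h1]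
  have hlam2 : lam < 2 := by nlinarith [h1num, hD]
  have hden1 : 0 < 4 * (2 - lam) := by linarith
  have hden2 : 0 < 3 * c₁ - c₂ * (lam + 1) := by nlinarith [key, mul_pos hc1 hD]
  have hl1 : (0:ℝ) ≤ lam + 1 := by linarith
  refine ⟨?_, ?_, ?_, ?_, ?_, ?_⟩ <;>
    refine mul_pos (by positivity) (div_pos ?_ (by linarith))
  · linarith
  · nlinarith [mul_nonneg hlam0 (by linarith : (0:ℝ) ≤ v₂ - v₁)]
  · nlinarith [mul_nonneg hlam0 (by linarith : (0:ℝ) ≤ v₃ - v₁)]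
  · nlinarith [key]
  · nlinarith [key, mul_nonneg (mul_nonneg hc2.le hl1) (by linarith : (0:ℝ) ≤ v₂ - v₁)]
  · nlinarith [key, mul_nonneg (mul_nonneg hc2.le hl1) (by linarith : (0:ℝ) ≤ v₃ - v₁)]
end
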